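/- The set of multiplicatively net-normal elements of {0,1}^ℕ has measure zero with respect to the Bernoulli measure λ: λ({x ∈ {0,1}^ℕ : x is (F_n)-normal in (ℕ,×) for every nice Følner sequence (F_n)}) = 0. -/

import Mathlib

open Filter MeasureTheory

/- `(F n)` is a Følner sequence in `(ℕ,×)` (positive integers under multiplication). -/
def MulFolner (F : ℕ → Finset ℕ) : Prop :=
  (∀ n, (F n).Nonempty) ∧ (∀ n, 0 ∉ F n) ∧
  ∀ k : ℕ, 0 < k → Tendsto
    (fun n => (((F n).filter (fun m => k * m ∈ F n)).card : ℝ) / (F n).card)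
    atTop (nhds 1)

/- A nice Følner sequence in `(ℕ,×)`. -/
def NiceFolner (F : ℕ → Finset ℕ) : Prop :=
  ∃ L : ℕ → ℕ, (∀ n, 0 < L n) ∧ (∀ n, L n ∣ L (n + 1)) ∧ (∀ n, L n ≠ L (n + 1)) ∧
    (∀ m : ℕ, 0 < m → ∀ᶠ n in atTop, m ∣ L n) ∧ (∀ n, F n = (L n).divisors)

/- `x : ℕ → {0,1}` is `(F n)`-normal in `(ℕ,×)`. -/
def MulNormalFun (F : ℕ → Finset ℕ) (x : ℕ → Bool) : Prop :=
  ∀ K : Finset ℕ, K.Nonempty → (∀ k ∈ K, 0 < k) → ∀ B : ℕ → Bool,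
    Tendsto
      (fun n => (((F n).filter (fun m => ∀ k ∈ K, x (k * m) = B k)).card : ℝ) / (F n).card)
      atTop (nhds ((1 / 2 : ℝ) ^ K.card))


private lemma primes_list (b k : ℕ) :
    ∃ ps : List ℕ, ps.length = k ∧ ps.Pairwise (· ≠ ·) ∧ ∀ p ∈ ps, p.Prime ∧ b < p := by
  induction k generalizing b with
  | zero => exact ⟨[], rfl, List.Pairwise.nil, by simp⟩
  | succ k ih =>
    obtain ⟨p, hpb, hp⟩ := Nat.exists_infinite_primes (b + 1)
    obtain ⟨ps, h1, h2, h3⟩ := ih p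
    refine ⟨p :: ps, by simp [h1], List.Pairwise.cons (fun q hq => ((h3 q hq).2).ne) h2, ?_⟩
    intro r hr
    rcases List.mem_cons.mp hr with rfl | hr'
    · exact ⟨hp, hpb⟩
    · exact ⟨(h3 r hr').1, lt_trans hpb ((h3 r hr').2)⟩


private lemma cylinder_ind (μ : Measure (ℕ → Bool))
    (hμ : ∀ (K : Finset ℕ) (B : ℕ → Bool),
      μ {x | ∀ h ∈ K, x h = B h} = (2 : ENNReal)⁻¹ ^ K.card)
    (M : ℕ) (hM : 0 < M) :
    ∀ (ps : List ℕ) (K0 : Finset ℕ) (B0 : ℕ → Bool),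
      (∀ p ∈ ps, p.Prime ∧ M < p) → ps.Pairwise (· ≠ ·) →
      (∀ p ∈ ps, ∀ d ∈ M.divisors, p * d ∉ K0) →
      μ {x : ℕ → Bool | (∀ p ∈ ps, ∃ d ∈ M.divisors, x (p * d) ≠ true) ∧
          ∀ h ∈ K0, x h = B0 h}
        ≤ (1 - (2 : ENNReal)⁻¹ ^ M.divisors.card) ^ ps.length
            * (2 : ENNReal)⁻¹ ^ K0.card := by
  intro ps
  induction ps with
  | nil =>
    intro K0 B0 _ _ _
    rw [List.length_nil, pow_zero, one_mul, ← hμ K0 B0]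
    exact measure_mono fun x hx => hx.2
  | cons p tail ih =>
    intro K0 B0 hprime hpw hK0
    obtain ⟨hp, hMp⟩ := hprime p List.mem_cons_self
    have hp0 : p ≠ 0 := hp.pos.ne'
    set D := M.divisors with hD
    set s := D.card with hs
    set blk : Finset ℕ := D.image (fun d => p * d) with hblk
    have hblkcard : blk.card = s := Finset.card_image_of_injective _ (mul_right_injective₀ hp0)
    have hdisjK : Disjoint K0 blk := by
      rw [Finset.disjoint_right]
      intro h hb hK
      obtain ⟨d, hd, rfl⟩ := Finset.mem_image.mp hb
      exact hK0 p List.mem_cons_self d hd hK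
    have hucard : (K0 ∪ blk).card = K0.card + s := by
      rw [Finset.card_union_of_disjoint hdisjK, hblkcard]
    set r : ENNReal := 1 - (2 : ENNReal)⁻¹ ^ s with hr
    set I : Finset (Finset ℕ) := D.powerset.erase D with hI
    set BT : Finset ℕ → ℕ → Bool := fun T h =>
      if h ∈ T.image (fun d => p * d) then true else if h ∈ blk then false else B0 h with hBT
    set ST : Finset ℕ → Set (ℕ → Bool) := fun T =>
      {x | (∀ p' ∈ tail, ∃ d ∈ D, x (p' * d) ≠ true) ∧ ∀ h ∈ K0 ∪ blk, x h = BT T h} with hST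
    have hcover : {x : ℕ → Bool | (∀ p' ∈ p :: tail, ∃ d ∈ D, x (p' * d) ≠ true) ∧
        ∀ h ∈ K0, x h = B0 h} ⊆ ⋃ T ∈ I, ST T := by
      intro x hx
      obtain ⟨hfail, hcyl⟩ := hx
      obtain ⟨d0, hd0D, hd0⟩ := hfail p List.mem_cons_self
      have hTI : D.filter (fun d => x (p * d) = true) ∈ I := by
        refine Finset.mem_erase.mpr ⟨?_, Finset.mem_powerset.mpr (Finset.filter_subset _ _)⟩
        intro hEq
        exact hd0 ((Finset.filter_eq_self.mp hEq) d0 hd0D)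
      refine Set.mem_biUnion hTI ⟨fun p' hp' => hfail p' (List.mem_cons_of_mem p hp'), ?_⟩
      intro h hh
      by_cases hb : h ∈ blk
      · obtain ⟨d, hdD, rfl⟩ := Finset.mem_image.mp hb
        by_cases hxt : x (p * d) = true
        · have hmem : p * d ∈ (D.filter (fun d => x (p * d) = true)).image (fun d => p * d) :=
            Finset.mem_image.mpr ⟨d, Finset.mem_filter.mpr ⟨hdD, hxt⟩, rfl⟩
          simp only [hBT, if_pos hmem]
          exact hxt
        · have hnot : p * d ∉ (D.filter (fun d => x (p * d) = true)).image (fun d => p * d) := by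
            intro hmem
            obtain ⟨d', hd', heq⟩ := Finset.mem_image.mp hmem
            cases mul_left_cancel₀ hp0 heq
            exact hxt (Finset.mem_filter.mp hd').2
          simp only [hBT, if_neg hnot, if_pos hb]
          exact (Bool.not_eq_true _).mp hxt
      · have hK : h ∈ K0 := (Finset.mem_union.mp hh).resolve_right hb
        have hnot : h ∉ (D.filter (fun d => x (p * d) = true)).image (fun d => p * d) :=
          fun hmem => hb (Finset.image_subset_image (Finset.filter_subset _ _) hmem)
        simp only [hBT, if_neg hnot, if_neg hb]
        exact hcyl h hK
    have hIcard : I.card = 2 ^ s - 1 := by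
      rw [hI, Finset.card_erase_of_mem (Finset.mem_powerset_self D), Finset.card_powerset]
    have hkey : ((2 ^ s - 1 : ℕ) : ENNReal) * (2 : ENNReal)⁻¹ ^ s = r := by
      have h1 : ((2 ^ s - 1 : ℕ) : ENNReal) = 2 ^ s - 1 := by
        push_cast [Nat.one_le_two_pow]
        ring
      rw [h1, ENNReal.sub_mul (fun _ _ => ENNReal.pow_ne_top (ENNReal.inv_ne_top.mpr two_ne_zero)),
        one_mul, ← mul_pow, ENNReal.mul_inv_cancel two_ne_zero ENNReal.ofNat_ne_top, one_pow, hr]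
    calc μ {x : ℕ → Bool | (∀ p' ∈ p :: tail, ∃ d ∈ D, x (p' * d) ≠ true) ∧
            ∀ h ∈ K0, x h = B0 h}
        ≤ μ (⋃ T ∈ I, ST T) := measure_mono hcover
      _ ≤ ∑ T ∈ I, μ (ST T) := measure_biUnion_finset_le I ST
      _ ≤ ∑ T ∈ I, r ^ tail.length * (2 : ENNReal)⁻¹ ^ (K0.card + s) := by
          refine Finset.sum_le_sum fun T _ => ?_
          have harg : ∀ p' ∈ tail, ∀ d ∈ M.divisors, p' * d ∉ K0 ∪ blk := by
            intro p2 hp2mem d hd hmem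
            rcases Finset.mem_union.mp hmem with hmem | hmem
            · exact hK0 p2 (List.mem_cons_of_mem p hp2mem) d hd hmem
            · obtain ⟨hp2, hMp2⟩ := hprime p2 (List.mem_cons_of_mem p hp2mem)
              obtain ⟨d', hd', heq⟩ := Finset.mem_image.mp hmem
              have hdvd : p2 ∣ p * d' := heq ▸ dvd_mul_right p2 d
              rcases (Nat.Prime.dvd_mul hp2).mp hdvd with h | h
              · exact ((List.pairwise_cons.mp hpw).1 p2 hp2mem)
                  ((Nat.prime_dvd_prime_iff_eq hp2 hp).mp h).symm
              · have hd'pos : 0 < d' := Nat.pos_of_mem_divisors hd'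
                have h1 : p2 ≤ d' := Nat.le_of_dvd hd'pos h
                have h2 : d' ≤ M := Nat.le_of_dvd hM (Nat.mem_divisors.mp hd').1
                omega
          have h := ih (K0 ∪ blk) (BT T)
            (fun p' hp' => hprime p' (List.mem_cons_of_mem p hp'))
            (List.Pairwise.of_cons hpw) harg
          rwa [hucard] at h
      _ = (I.card : ENNReal) * (r ^ tail.length * (2 : ENNReal)⁻¹ ^ (K0.card + s)) := by
          rw [Finset.sum_const, nsmul_eq_mul]
      _ = r ^ tail.length * (2 : ENNReal)⁻¹ ^ K0.card * (((2 ^ s - 1 : ℕ) : ENNReal)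
            * (2 : ENNReal)⁻¹ ^ s) := by
          rw [hIcard, pow_add]; ring
      _ = r ^ (p :: tail).length * (2 : ENNReal)⁻¹ ^ K0.card := by
          rw [hkey, List.length_cons, pow_succ]; ring

private lemma bad_null (μ : Measure (ℕ → Bool))
    (hμ : ∀ (K : Finset ℕ) (B : ℕ → Bool),
      μ {x | ∀ h ∈ K, x h = B h} = (2 : ENNReal)⁻¹ ^ K.card)
    (M : ℕ) (hM : 0 < M) :
    μ {x : ℕ → Bool | ∀ p : ℕ, p.Prime → M < p → ∃ d ∈ M.divisors, x (p * d) ≠ true} = 0 := by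
  set r : ENNReal := 1 - (2 : ENNReal)⁻¹ ^ M.divisors.card with hr
  have hrlt : r < 1 := ENNReal.sub_lt_self ENNReal.one_ne_top one_ne_zero
    (pow_ne_zero _ (ENNReal.inv_ne_zero.mpr ENNReal.ofNat_ne_top))
  have hbound : ∀ k : ℕ,
      μ {x : ℕ → Bool | ∀ p : ℕ, p.Prime → M < p → ∃ d ∈ M.divisors, x (p * d) ≠ true}
        ≤ r ^ k := by
    intro k
    obtain ⟨ps, hlen, hpw, hps⟩ := primes_list M k
    have h := cylinder_ind μ hμ M hM ps ∅ (fun _ => true)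
      (fun p hp => hps p hp) hpw (by simp)
    rw [Finset.card_empty, pow_zero, mul_one, hlen] at h
    refine le_trans (measure_mono ?_) h
    intro x hx
    exact ⟨fun p hp => hx p (hps p hp).1 (hps p hp).2, by simp⟩
  have h0 : Tendsto (fun k : ℕ => r ^ k) atTop (nhds 0) :=
    ENNReal.tendsto_pow_atTop_nhds_zero_of_lt_one hrlt
  have := le_of_tendsto_of_tendsto' tendsto_const_nhds h0 hbound
  exact le_antisymm this zero_le

private lemma exists_bad_folner (x : ℕ → Bool)
    (hx : ∀ M : ℕ, 0 < M → ∃ p : ℕ, p.Prime ∧ M < p ∧ ∀ d ∈ M.divisors, x (p * d) = true) :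
    ∃ F : ℕ → Finset ℕ, NiceFolner F ∧ ¬ MulNormalFun F x := by
  have hx' : ∀ M : ℕ, ∃ p : ℕ,
      0 < M → (p.Prime ∧ M < p ∧ ∀ d ∈ M.divisors, x (p * d) = true) := by
    intro M
    by_cases h : 0 < M
    · exact (hx M h).imp fun p hp => fun _ => hp
    · exact ⟨2, fun h' => absurd h' h⟩
  choose f hf using hx'
  set L : ℕ → ℕ := fun n => Nat.rec 1
    (fun k m => (m * (k + 1)) * f (m * (k + 1)) * f ((m * (k + 1)) * f (m * (k + 1)))) n
    with hLdef
  have hLs : ∀ n, L (n + 1) =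
      (L n * (n + 1)) * f (L n * (n + 1)) * f ((L n * (n + 1)) * f (L n * (n + 1))) :=
    fun n => rfl
  have hpos : ∀ n, 0 < L n := by
    intro n
    induction n with
    | zero => exact one_pos
    | succ n ihn =>
      have hM : 0 < L n * (n + 1) := Nat.mul_pos ihn n.succ_pos
      have h1 : 0 < f (L n * (n + 1)) := ((hf _ hM).1).pos
      have h2 : 0 < f ((L n * (n + 1)) * f (L n * (n + 1))) :=
        ((hf _ (Nat.mul_pos hM h1)).1).pos
      rw [hLs]
      exact Nat.mul_pos (Nat.mul_pos hM h1) h2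
  have hdvd : ∀ n, L n ∣ L (n + 1) := by
    intro n
    rw [hLs]
    exact ((dvd_mul_right (L n) (n + 1)).mul_right _).mul_right _
  refine ⟨fun n => (L n).divisors, ⟨L, hpos, hdvd, ?_, ?_, fun n => rfl⟩, ?_⟩
  · -- L n ≠ L (n+1)
    intro n
    have hM : 0 < L n * (n + 1) := Nat.mul_pos (hpos n) n.succ_pos
    have h1 : 1 < f (L n * (n + 1)) := ((hf _ hM).1).one_lt
    have h2 : 0 < f ((L n * (n + 1)) * f (L n * (n + 1))) :=
      ((hf _ (Nat.mul_pos hM (lt_trans one_pos h1))).1).pos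
    have : L n < L (n + 1) := by
      rw [hLs]
      calc L n ≤ L n * (n + 1) := Nat.le_mul_of_pos_right _ n.succ_pos
        _ < (L n * (n + 1)) * f (L n * (n + 1)) :=
            (lt_mul_iff_one_lt_right hM).mpr h1
        _ ≤ _ := Nat.le_mul_of_pos_right _ h2
    exact this.ne
  · -- eventual divisibility
    intro m hm
    have key : ∀ n k, 0 < k → k ≤ n → k ∣ L n := by
      intro n
      induction n with
      | zero => intro k hk hk0; omega
      | succ n ihn =>
        intro k hk hkn
        rcases (by omega : k ≤ n ∨ k = n + 1) with h | h
        · exact (ihn k hk h).trans (hdvd n)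
        · subst h
          rw [hLs]
          exact ((dvd_mul_left (n + 1) (L n)).mul_right _).mul_right _
    exact Filter.eventually_atTop.mpr ⟨m, fun n hn => key n m hm hn⟩
  · -- not normal
    intro hN
    have h1 := hN {1} ⟨1, Finset.mem_singleton_self 1⟩ (by simp) (fun _ => true)
    rw [Finset.card_singleton, pow_one] at h1
    have hlow : ∀ n, (3 / 4 : ℝ) ≤
        ((@Finset.filter _
            (fun m : ℕ => ∀ k ∈ ({1} : Finset ℕ), x (k * m) = true) (fun _ => Finset.decidableDforallFinset) ((L (n + 1)).divisors)).card : ℝ)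
          / ((L (n + 1)).divisors).card := by
      intro n
      set M := L n * (n + 1) with hMdef
      have hM : 0 < M := Nat.mul_pos (hpos n) n.succ_pos
      obtain ⟨hp, hMp, hallp⟩ := hf M hM
      set p := f M with hpdef
      have hMp0 : 0 < M * p := Nat.mul_pos hM hp.pos
      obtain ⟨hq, hMpq, hallq⟩ := hf (M * p) hMp0
      set q := f (M * p) with hqdef
      have hL1 : L (n + 1) = M * p * q := hLs n
      have hp0 : p ≠ 0 := hp.pos.ne'
      have hq0 : q ≠ 0 := hq.pos.ne'
      have hpM : ¬ p ∣ M := fun h => absurd (Nat.le_of_dvd hM h) (not_le.mpr hMp)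
      have hqMp : ¬ q ∣ M * p := fun h => absurd (Nat.le_of_dvd hMp0 h) (not_le.mpr hMpq)
      have cop1 : Nat.Coprime M p := ((Nat.Prime.coprime_iff_not_dvd hp).mpr hpM).symm
      have cop2 : Nat.Coprime (M * p) q := ((Nat.Prime.coprime_iff_not_dvd hq).mpr hqMp).symm
      set D := M.divisors with hD
      set s := D.card with hs
      have hspos : 0 < s := Finset.card_pos.mpr ⟨1, Nat.one_mem_divisors.mpr hM.ne'⟩
      have hcardp : p.divisors.card = 2 := by
        rw [hp.divisors, Finset.card_insert_of_notMem (by simp [hp.one_lt.ne]),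
          Finset.card_singleton]
      have hcardq : q.divisors.card = 2 := by
        rw [hq.divisors, Finset.card_insert_of_notMem (by simp [hq.one_lt.ne]),
          Finset.card_singleton]
      have hc1 : (M * p).divisors.card = s * 2 := by
        rw [cop1.card_divisors_mul, hcardp]
      have hc2 : (M * p * q).divisors.card = s * 4 := by
        rw [cop2.card_divisors_mul, hc1, hcardq]; ring
      have hMltq : M < q := lt_of_le_of_lt (Nat.le_mul_of_pos_right _ hp.pos) hMpq
      have hpltq : p < q := lt_of_le_of_lt (Nat.le_mul_of_pos_left _ hM) hMpq
      set S1 : Finset ℕ := D.image (fun d => p * d) with hS1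
      set S2 : Finset ℕ := D.image (fun d => q * d) with hS2
      set S3 : Finset ℕ := D.image (fun d => q * (p * d)) with hS3
      have hne : M * p * q ≠ 0 := by positivity
      have dD : ∀ d ∈ D, 0 < d ∧ d ≤ M ∧ d ∣ M := fun d hd =>
        ⟨Nat.pos_of_mem_divisors hd, Nat.le_of_dvd hM (Nat.mem_divisors.mp hd).1,
          (Nat.mem_divisors.mp hd).1⟩
      -- subsets of the filtered set
      set T := @Finset.filter _
          (fun m : ℕ => ∀ k ∈ ({1} : Finset ℕ), x (k * m) = true) (fun _ => Finset.decidableDforallFinset) ((M * p * q).divisors) with hT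
      have hsub : S1 ∪ S2 ∪ S3 ⊆ T := by
        intro m hm
        have main : m ∣ M * p * q ∧ x m = true := by
          rcases Finset.mem_union.mp hm with hm | hm
          · rcases Finset.mem_union.mp hm with hm | hm
            · obtain ⟨d, hd, rfl⟩ := Finset.mem_image.mp hm
              refine ⟨Dvd.dvd.mul_right ?_ q, hallp d hd⟩
              rw [mul_comm p d]
              exact mul_dvd_mul_right (dD d hd).2.2 p
            · obtain ⟨d, hd, rfl⟩ := Finset.mem_image.mp hm
              have hdMp : d ∈ (M * p).divisors :=
                Nat.mem_divisors.mpr ⟨(dD d hd).2.2.mul_right p, hMp0.ne'⟩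
              refine ⟨?_, hallq d hdMp⟩
              rw [mul_comm q d]
              exact mul_dvd_mul_right (Nat.mem_divisors.mp hdMp).1 q
          · obtain ⟨d, hd, rfl⟩ := Finset.mem_image.mp hm
            have hpdMp : p * d ∈ (M * p).divisors := by
              refine Nat.mem_divisors.mpr ⟨?_, hMp0.ne'⟩
              rw [mul_comm p d]
              exact mul_dvd_mul_right (dD d hd).2.2 p
            refine ⟨?_, hallq (p * d) hpdMp⟩
            rw [mul_comm q (p * d)]
            exact mul_dvd_mul_right (Nat.mem_divisors.mp hpdMp).1 q
        refine Finset.mem_filter.mpr ⟨Nat.mem_divisors.mpr ⟨main.1, hne⟩, ?_⟩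
        intro k hk
        rw [Finset.mem_singleton.mp hk, one_mul]
        exact main.2
      -- disjointness
      have hd12 : Disjoint S1 S2 := by
        rw [Finset.disjoint_left]
        rintro m hm1 hm2
        obtain ⟨d, hd, rfl⟩ := Finset.mem_image.mp hm1
        obtain ⟨d', hd', heq⟩ := Finset.mem_image.mp hm2
        have hdvd : q ∣ p * d := heq ▸ dvd_mul_right q d'
        rcases (Nat.Prime.dvd_mul hq).mp hdvd with h | h
        · exact absurd (Nat.le_of_dvd hp.pos h) (not_le.mpr hpltq)
        · exact absurd (le_trans (Nat.le_of_dvd (dD d hd).1 h) (dD d hd).2.1)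
            (not_le.mpr hMltq)
      have hd13 : Disjoint S1 S3 := by
        rw [Finset.disjoint_left]
        rintro m hm1 hm3
        obtain ⟨d, hd, rfl⟩ := Finset.mem_image.mp hm1
        obtain ⟨d', hd', heq⟩ := Finset.mem_image.mp hm3
        have hdvd : q ∣ p * d := heq ▸ dvd_mul_right q (p * d')
        rcases (Nat.Prime.dvd_mul hq).mp hdvd with h | h
        · exact absurd (Nat.le_of_dvd hp.pos h) (not_le.mpr hpltq)
        · exact absurd (le_trans (Nat.le_of_dvd (dD d hd).1 h) (dD d hd).2.1)
            (not_le.mpr hMltq)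
      have hd23 : Disjoint S2 S3 := by
        rw [Finset.disjoint_left]
        rintro m hm2 hm3
        obtain ⟨d, hd, rfl⟩ := Finset.mem_image.mp hm2
        obtain ⟨d', hd', heq⟩ := Finset.mem_image.mp hm3
        have heq' : d = p * d' := mul_left_cancel₀ hq0 heq.symm
        have : p ∣ d := heq' ▸ dvd_mul_right p d'
        exact absurd (le_trans (Nat.le_of_dvd (dD d hd).1 this) (dD d hd).2.1)
          (not_le.mpr hMp)
      have hcS1 : S1.card = s := Finset.card_image_of_injective _ (mul_right_injective₀ hp0)
      have hcS2 : S2.card = s := Finset.card_image_of_injective _ (mul_right_injective₀ hq0)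
      have hcS3 : S3.card = s := by
        refine Finset.card_image_of_injective _ ?_
        intro a b hab
        exact mul_left_cancel₀ hp0 (mul_left_cancel₀ hq0 hab)
      have hcU : (S1 ∪ S2 ∪ S3).card = 3 * s := by
        rw [Finset.card_union_of_disjoint (Finset.disjoint_union_left.mpr ⟨hd13, hd23⟩),
          Finset.card_union_of_disjoint hd12, hcS1, hcS2, hcS3]
        ring
      have hTcard : 3 * s ≤ T.card := hcU ▸ Finset.card_le_card hsub
      rw [hL1, hc2]
      have h4 : (0 : ℝ) < ((s * 4 : ℕ) : ℝ) := by
        exact_mod_cast Nat.mul_pos hspos (by norm_num)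
      rw [le_div_iff₀ h4]
      have h5 : (3 : ℝ) * s ≤ (T.card : ℝ) := by exact_mod_cast hTcard
      push_cast
      linarith
    have h2 : ∀ᶠ n in atTop,
        ((@Finset.filter _
            (fun m : ℕ => ∀ k ∈ ({1} : Finset ℕ), x (k * m) = true) (fun _ => Finset.decidableDforallFinset) ((L n).divisors)).card : ℝ)
          / ((L n).divisors).card < 3 / 4 :=
      h1.eventually_lt_const (by norm_num)
    obtain ⟨N, hN⟩ := Filter.eventually_atTop.mp h2
    exact absurd (hlow N) (not_le.mpr (hN (N + 1) (Nat.le_succ N)))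

/-- The set of multiplicatively net-normal elements of `{0,1}^ℕ` has measure zero
with respect to the Bernoulli measure `λ = μ` (the `(1/2,1/2)`-product measure on
`{0,1}^ℕ`, characterized by its values on cylinder sets). -/
theorem net_normal_measure_zero
    (μ : Measure (ℕ → Bool))
    (hμ : ∀ (K : Finset ℕ) (B : ℕ → Bool),
      μ {x | ∀ h ∈ K, x h = B h} = (2 : ENNReal)⁻¹ ^ K.card) :
    μ {x : ℕ → Bool | ∀ F : ℕ → Finset ℕ, NiceFolner F → MulNormalFun F x} = 0 := by
  have hsub : {x : ℕ → Bool | ∀ F : ℕ → Finset ℕ, NiceFolner F → MulNormalFun F x} ⊆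
      ⋃ M : ℕ, {x : ℕ → Bool | ∀ p : ℕ, p.Prime → (M + 1) < p →
        ∃ d ∈ (M + 1).divisors, x (p * d) ≠ true} := by
    intro x hxnormal
    by_contra hc
    simp only [Set.mem_iUnion, not_exists] at hc
    have hx : ∀ M : ℕ, 0 < M → ∃ p : ℕ, p.Prime ∧ M < p ∧
        ∀ d ∈ M.divisors, x (p * d) = true := by
      intro M hM
      have h := hc (M - 1)
      rw [(by omega : M - 1 + 1 = M)] at h
      simp only [Set.mem_setOf_eq, not_forall] at h
      obtain ⟨p, h1, h2, h3⟩ := h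
      refine ⟨p, h1, h2, fun d hd => ?_⟩
      by_contra hne
      exact h3 ⟨d, hd, hne⟩
    obtain ⟨F, hF1, hF2⟩ := exists_bad_folner x hx
    exact hF2 (hxnormal F hF1)
  refine measure_mono_null hsub (measure_iUnion_null fun M => ?_)
  exact bad_null μ hμ (M + 1) (Nat.succ_pos M)
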